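/- Fix an integer α ≥ 1 and consider the energy plus integral weighted flow time objective, F(S, 𝒥) = Σ_{j∈𝒥} v_j·(c_j^S − r_j). Let 𝒥₁, 𝒥₂ be instances with |𝒥₁| = |𝒥₂|, let π : 𝒥₁ → 𝒥₂ be a bijection, let η, η' ∈ [0,1], and set β = max(4·max_{j} v_j, 2^α − 1). Then: (i) if |r_j − r_{π(j)}| ≤ η', p_j ≤ p_{π(j)}·(1+η) and v_j ≤ v_{π(j)}·(1+η) for all j ∈ 𝒥₁, then OPT(𝒥₁) ≤ (1 + βη)·OPT(𝒥₂) + β·|𝒥₁|·η'; and (ii) if S₁, S₂ are feasible schedules for 𝒥₁, 𝒥₂ such that for all j ∈ 𝒥₁: p_j ≤ p_{π(j)}, v_j ≤ v_{π(j)}, r_j ≥ r_{π(j)} − η', and w_j^{S₁}(t) ≤ w_{π(j)}^{S₂}(t − η') for all t ≥ r_{π(j)} + η', then F(S₁, 𝒥₁) ≤ F(S₂, 𝒥₂) + β·|𝒥₁|·η'. That is, the energy plus integral weighted flow time cost function is max(4·max_j v_j, 2^α − 1)-smooth. -/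

import Mathlib

/-! STATEMENT 12 (Lemma D.1): the energy plus integral weighted flow time cost function is max(4·max_j v_j, 2^α − 1)-smooth. -/

open MeasureTheory Finset
open scoped ENNReal BigOperators Classical

/-- A job: identifier, release time, processing time, weight. -/
structure Job where
  id : ℕ
  r : ℝ
  p : ℝ
  v : ℝ

noncomputable instance : DecidableEq Job := Classical.decEq _

/-- An instance is valid when release times are nonnegative and processing
times and weights are positive. -/
def ValidInstance (J : Finset Job) : Prop :=
  ∀ j ∈ J, 0 ≤ j.r ∧ 0 < j.p ∧ 0 < j.v

/-- A schedule: speed functions for jobs. -/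
abbrev Sched := Job → ℝ → ℝ

/-- `S` is a feasible schedule for the instance `J`. -/
def Feasible (J : Finset Job) (S : Sched) : Prop :=
  ∀ j ∈ J, Measurable (S j) ∧ (∀ t, 0 ≤ S j t) ∧ (∀ t, t < j.r → S j t = 0) ∧
    (∫ t in Set.Ici j.r, S j t) = j.p

/-- Work profile of job `j` under schedule `S`: remaining work at time `t`. -/
noncomputable def work (S : Sched) (j : Job) (t : ℝ) : ℝ :=
  j.p - ∫ u in Set.Icc j.r t, S j u

/-- Energy consumption of schedule `S` on instance `J`, with exponent `α`. -/
noncomputable def energy (α : ℕ) (J : Finset Job) (S : Sched) : ℝ≥0∞ :=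
  ∫⁻ t in Set.Ioi (0 : ℝ), ENNReal.ofReal ((∑ j ∈ J, S j t) ^ α)

/-- Completion time of job `j` under schedule `S`:
`inf {t ≥ r_j : w_j^S(t) = 0}` (equal to `∞` if `j` is never completed). -/
noncomputable def ctime (S : Sched) (j : Job) : ℝ≥0∞ :=
  ⨅ (t : ℝ) (_ : j.r ≤ t ∧ work S j t = 0), ENNReal.ofReal t

/-- Integral weighted flow time `F(S,𝒥) = Σ_j v_j·(c_j^S − r_j)`. -/
noncomputable def wFlowTime (S : Sched) (J : Finset Job) : ℝ≥0∞ :=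
  ∑ j ∈ J, ENNReal.ofReal j.v * (ctime S j - ENNReal.ofReal j.r)

/-- Energy plus integral weighted flow time cost. -/
noncomputable def cost (α : ℕ) (S : Sched) (J : Finset Job) : ℝ≥0∞ :=
  energy α J S + wFlowTime S J

/-- Optimal (offline) energy plus integral weighted flow time cost. -/
noncomputable def OPT (α : ℕ) (J : Finset Job) : ℝ≥0∞ :=
  ⨅ (S : Sched) (_ : Feasible J S), cost α S J

/-- The maximum weight `max_j v_j` of a job of `J`. -/
noncomputable def maxV (J : Finset Job) : ℝ :=
  J.fold max 0 Job.v

section Aux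


lemma one_add_pow_le (α : ℕ) {η : ℝ} (h0 : 0 ≤ η) (h1 : η ≤ 1) :
    (1 + η) ^ α ≤ 1 + ((2:ℝ) ^ α - 1) * η := by
  induction α with
  | zero => norm_num
  | succ n ih =>
    have h2 : (1:ℝ) ≤ 2 ^ n := one_le_pow₀ (by norm_num)
    have h3 : (0:ℝ) ≤ 1 + η := by linarith
    calc (1+η)^(n+1) = (1+η)^n * (1+η) := pow_succ _ _
      _ ≤ (1 + ((2:ℝ)^n - 1)*η) * (1+η) := by nlinarith
      _ ≤ 1 + ((2:ℝ)^(n+1) - 1) * η := by rw [pow_succ]; nlinarith [mul_nonneg (sub_nonneg.2 h2) (mul_nonneg h0 (sub_nonneg.2 h1))]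

lemma integrableOn_of_integral_pos {f : ℝ → ℝ} {s : Set ℝ} (h : 0 < ∫ t in s, f t) :
    IntegrableOn f s volume := by
  by_contra hc
  rw [MeasureTheory.integral_undef hc] at h
  exact lt_irrefl _ h

lemma cum_mono {g : ℝ → ℝ} {s t : Set ℝ} (hint : IntegrableOn g t volume)
    (h0 : ∀ u, 0 ≤ g u) (hs : s ⊆ t) : ∫ u in s, g u ≤ ∫ u in t, g u :=
  setIntegral_mono_set hint (ae_of_all _ h0) (HasSubset.Subset.eventuallyLE hs)

lemma integral_Icc_self (f : ℝ → ℝ) (a : ℝ) : ∫ t in Set.Icc a a, f t = 0 := by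
  rw [Set.Icc_self]
  exact setIntegral_measure_zero _ (measure_singleton a)

end Aux

section Shift

lemma shift_pre_Ici (d a : ℝ) : (fun t : ℝ => t + -d) ⁻¹' Set.Ici (a - d) = Set.Ici a := by
  ext x; simp only [Set.mem_preimage, Set.mem_Ici]; constructor <;> intro <;> linarith

lemma shift_pre_Icc (d a b : ℝ) :
    (fun t : ℝ => t + -d) ⁻¹' Set.Icc (a - d) (b - d) = Set.Icc a b := by
  ext x; simp only [Set.mem_preimage, Set.mem_Icc]
  constructor <;> intro h <;> exact ⟨by linarith [h.1], by linarith [h.2]⟩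

lemma shift_pre_Ioi (d a : ℝ) : (fun t : ℝ => t + -d) ⁻¹' Set.Ioi (a - d) = Set.Ioi a := by
  ext x; simp only [Set.mem_preimage, Set.mem_Ioi]; constructor <;> intro <;> linarith

lemma integral_Ici_shift (f : ℝ → ℝ) (d a : ℝ) :
    ∫ t in Set.Ici a, f (t - d) = ∫ t in Set.Ici (a - d), f t := by
  have h := (measurePreserving_add_right volume (-d)).setIntegral_preimage_emb
    (measurableEmbedding_addRight (-d)) f (Set.Ici (a - d))
  rw [shift_pre_Ici] at h
  simpa [sub_eq_add_neg] using h

lemma integral_Icc_shift (f : ℝ → ℝ) (d a b : ℝ) :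
    ∫ t in Set.Icc a b, f (t - d) = ∫ t in Set.Icc (a - d) (b - d), f t := by
  have h := (measurePreserving_add_right volume (-d)).setIntegral_preimage_emb
    (measurableEmbedding_addRight (-d)) f (Set.Icc (a - d) (b - d))
  rw [shift_pre_Icc] at h
  simpa [sub_eq_add_neg] using h

lemma lintegral_Ioi_shift (f : ℝ → ℝ≥0∞) (d a : ℝ) :
    ∫⁻ t in Set.Ioi a, f (t - d) = ∫⁻ t in Set.Ioi (a - d), f t := by
  have h := (measurePreserving_add_right volume (-d)).setLIntegral_comp_preimage_emb
    (measurableEmbedding_addRight (-d)) f (Set.Ioi (a - d))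
  rw [shift_pre_Ioi] at h
  simpa [sub_eq_add_neg] using h

lemma integrableOn_shift {f : ℝ → ℝ} {d a : ℝ} (h : IntegrableOn f (Set.Ici (a - d)) volume) :
    IntegrableOn (fun t => f (t - d)) (Set.Ici a) volume := by
  have hmp := (measurePreserving_add_right volume (-d)).restrict_preimage_emb
    (measurableEmbedding_addRight (-d)) (Set.Ici (a - d))
  have h2 := (hmp.integrable_comp_emb (measurableEmbedding_addRight (-d))).2 h
  rw [shift_pre_Ici] at h2
  have : (f ∘ fun t : ℝ => t + -d) = fun t => f (t - d) := by
    funext t; simp [sub_eq_add_neg]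
  rwa [this] at h2

lemma integral_Ici_extend {f : ℝ → ℝ} {a b : ℝ} (hab : a ≤ b) (h0 : ∀ t < b, f t = 0) :
    ∫ t in Set.Ici a, f t = ∫ t in Set.Ici b, f t :=
  setIntegral_eq_of_subset_of_forall_diff_eq_zero measurableSet_Ici (Set.Ici_subset_Ici.2 hab)
    (fun x hx => h0 x (by simpa using hx.2))

lemma integrableOn_Ici_extend {f : ℝ → ℝ} {a b : ℝ} (hab : a ≤ b) (h0 : ∀ t < b, f t = 0)
    (h : IntegrableOn f (Set.Ici b) volume) : IntegrableOn f (Set.Ici a) volume := by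
  have h1 : IntegrableOn f (Set.Ico a b) volume := by
    refine (integrableOn_zero (ε' := ℝ)).congr_fun (fun x hx => (h0 x hx.2).symm) measurableSet_Ico
  have h2 := h1.union h
  rwa [Set.Ico_union_Ici_eq_Ici hab] at h2

end Shift

section Work

lemma maxV_nonneg (J : Finset Job) : 0 ≤ maxV J :=
  (Finset.le_fold_max _).2 (Or.inl le_rfl)

lemma le_maxV {J : Finset Job} {j : Job} (hj : j ∈ J) : j.v ≤ maxV J :=
  (Finset.le_fold_max _).2 (Or.inr ⟨j, hj, le_rfl⟩)

lemma work_nonneg {S : Sched} {j : Job} (h0 : ∀ t, 0 ≤ S j t)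
    (hint : IntegrableOn (S j) (Set.Ici j.r) volume)
    (hp : (∫ t in Set.Ici j.r, S j t) = j.p) (t : ℝ) : 0 ≤ work S j t := by
  have h := cum_mono hint h0 (Set.Icc_subset_Ici_self (a := t) (b := j.r))
  rw [hp] at h
  simp only [work]
  linarith

lemma work_zero_of_le {S : Sched} {j : Job} (h0 : ∀ t, 0 ≤ S j t)
    (hint : IntegrableOn (S j) (Set.Ici j.r) volume)
    (hp : (∫ t in Set.Ici j.r, S j t) = j.p) {c t : ℝ} (hct : c ≤ t)
    (hc : work S j c = 0) : work S j t = 0 := by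
  have h1 : ∫ u in Set.Icc j.r c, S j u ≤ ∫ u in Set.Icc j.r t, S j u :=
    cum_mono (hint.mono_set Set.Icc_subset_Ici_self) h0 (Set.Icc_subset_Icc_right hct)
  have h2 := work_nonneg h0 hint hp t
  simp only [work] at hc h2 ⊢
  linarith

lemma work_at_release {S : Sched} {j : Job} : work S j j.r = j.p := by
  simp [work, integral_Icc_self]

lemma ctime_le {S : Sched} {j : Job} {t : ℝ} (h1 : j.r ≤ t) (h2 : work S j t = 0) :
    ctime S j ≤ ENNReal.ofReal t :=
  iInf_le_of_le t (iInf_le_of_le ⟨h1, h2⟩ le_rfl)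

lemma ctime_shift_le {S₁ S₂ : Sched} {j₁ j₂ : Job} {d : ℝ} (hd : 0 ≤ d) (hr₂ : 0 ≤ j₂.r)
    (h : ∀ c, j₂.r ≤ c → work S₂ j₂ c = 0 → j₁.r ≤ c + d ∧ work S₁ j₁ (c + d) = 0) :
    ctime S₁ j₁ ≤ ctime S₂ j₂ + ENNReal.ofReal d := by
  have h1 : ctime S₁ j₁ - ENNReal.ofReal d ≤ ctime S₂ j₂ := by
    refine le_iInf fun c => le_iInf fun hc => ?_
    obtain ⟨ha, hb⟩ := h c hc.1 hc.2
    have h2 : ctime S₁ j₁ ≤ ENNReal.ofReal (c + d) := ctime_le ha hb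
    rw [tsub_le_iff_right]
    calc ctime S₁ j₁ ≤ ENNReal.ofReal (c + d) := h2
      _ = ENNReal.ofReal c + ENNReal.ofReal d := ENNReal.ofReal_add (le_trans hr₂ hc.1) hd
  calc ctime S₁ j₁ ≤ ctime S₁ j₁ - ENNReal.ofReal d + ENNReal.ofReal d := le_tsub_add
    _ ≤ ctime S₂ j₂ + ENNReal.ofReal d := add_le_add_left h1 _

lemma flow_job {c₁ c₂ : ℝ≥0∞} {r₁ r₂ v₁ v₂ M d : ℝ}
    (hd : 0 ≤ d) (hr₁ : 0 ≤ r₁) (hv₁ : 0 ≤ v₁) (hv₂ : v₁ ≤ v₂) (hM : v₁ ≤ M)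
    (hr : r₂ ≤ r₁ + d) (hc : c₁ ≤ c₂ + ENNReal.ofReal d) :
    ENNReal.ofReal v₁ * (c₁ - ENNReal.ofReal r₁) ≤
      ENNReal.ofReal v₂ * (c₂ - ENNReal.ofReal r₂) + ENNReal.ofReal (2 * M * d) := by
  have h2d : ENNReal.ofReal (2 * d) = ENNReal.ofReal d + ENNReal.ofReal d := by
    rw [two_mul, ENNReal.ofReal_add hd hd]
  have key : c₁ - ENNReal.ofReal r₁ ≤ (c₂ - ENNReal.ofReal r₂) + ENNReal.ofReal (2 * d) := by
    rw [tsub_le_iff_right]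
    have h1 : c₂ ≤ (c₂ - ENNReal.ofReal r₂) + ENNReal.ofReal r₂ := le_tsub_add
    have h2 : ENNReal.ofReal r₂ ≤ ENNReal.ofReal r₁ + ENNReal.ofReal d := by
      rw [← ENNReal.ofReal_add hr₁ hd]; exact ENNReal.ofReal_le_ofReal hr
    calc c₁ ≤ c₂ + ENNReal.ofReal d := hc
      _ ≤ ((c₂ - ENNReal.ofReal r₂) + ENNReal.ofReal r₂) + ENNReal.ofReal d :=
        add_le_add_left h1 _
      _ ≤ ((c₂ - ENNReal.ofReal r₂) + (ENNReal.ofReal r₁ + ENNReal.ofReal d)) +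
          ENNReal.ofReal d := by gcongr
      _ = (c₂ - ENNReal.ofReal r₂) + ENNReal.ofReal (2 * d) + ENNReal.ofReal r₁ := by
        rw [h2d]; ring
  calc ENNReal.ofReal v₁ * (c₁ - ENNReal.ofReal r₁)
      ≤ ENNReal.ofReal v₁ * ((c₂ - ENNReal.ofReal r₂) + ENNReal.ofReal (2 * d)) :=
        mul_le_mul_right key _
    _ = ENNReal.ofReal v₁ * (c₂ - ENNReal.ofReal r₂) +
        ENNReal.ofReal v₁ * ENNReal.ofReal (2 * d) := mul_add _ _ _
    _ ≤ ENNReal.ofReal v₂ * (c₂ - ENNReal.ofReal r₂) + ENNReal.ofReal (2 * M * d) := by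
        refine add_le_add (mul_le_mul_left (ENNReal.ofReal_le_ofReal hv₂) _) ?_
        rw [← ENNReal.ofReal_mul hv₁]
        exact ENNReal.ofReal_le_ofReal (by nlinarith)

end Work

section Trunc

lemma exists_trunc (g : ℝ → ℝ) (hm : Measurable g) (h0 : ∀ t, 0 ≤ g t)
    (r p : ℝ) (hint : IntegrableOn g (Set.Ici r) volume)
    (hp : 0 < p) (hpP : p ≤ ∫ t in Set.Ici r, g t) :
    ∃ h : ℝ → ℝ, Measurable h ∧ (∀ t, 0 ≤ h t) ∧ (∀ t, h t ≤ g t) ∧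
      (∫ t in Set.Ici r, h t) = p ∧
      (∀ T, p ≤ ∫ t in Set.Icc r T, g t → (∫ t in Set.Icc r T, h t) = p) := by
  by_cases hPp : (∫ t in Set.Ici r, g t) ≤ p
  · refine ⟨g, hm, h0, fun t => le_rfl, le_antisymm hPp hpP, fun T hT => ?_⟩
    refine le_antisymm ?_ hT
    exact le_trans (cum_mono hint h0 Set.Icc_subset_Ici_self) hPp
  · push_neg at hPp
    -- find a point where the cumulative integral exceeds p
    have hU : ⋃ n : ℕ, Set.Icc r (r + n) = Set.Ici r := by
      ext x
      simp only [Set.mem_iUnion, Set.mem_Icc, Set.mem_Ici]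
      constructor
      · rintro ⟨n, h1, _⟩; exact h1
      · intro hx
        obtain ⟨n, hn⟩ := exists_nat_ge (x - r)
        exact ⟨n, hx, by linarith⟩
    have hmono : Monotone fun n : ℕ => Set.Icc r (r + (n : ℝ)) := fun m n hmn =>
      Set.Icc_subset_Icc_right (by have : (m : ℝ) ≤ n := Nat.cast_le.2 hmn; linarith)
    have htend := tendsto_setIntegral_of_monotone (fun n : ℕ => measurableSet_Icc) hmono
      (by rw [hU]; exact hint)
    rw [hU] at htend
    have hev : ∀ᶠ n : ℕ in Filter.atTop, p < ∫ t in Set.Icc r (r + (n : ℝ)), g t :=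
      htend.eventually (eventually_gt_nhds hPp)
    obtain ⟨n, hn⟩ := hev.exists
    have hrn : r ≤ r + (n : ℝ) := by have : (0:ℝ) ≤ n := Nat.cast_nonneg n; linarith
    have hcont : ContinuousOn (fun x => ∫ t in Set.Icc r x, g t) (Set.Icc r (r + (n:ℝ))) :=
      intervalIntegral.continuousOn_primitive_Icc (hint.mono_set Set.Icc_subset_Ici_self)
    have hmem : p ∈ Set.Icc ((fun x => ∫ t in Set.Icc r x, g t) r)
        ((fun x => ∫ t in Set.Icc r x, g t) (r + (n:ℝ))) := by
      constructor
      · simpa [integral_Icc_self] using hp.le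
      · exact hn.le
    obtain ⟨c, hcmem, hc⟩ := intermediate_value_Icc hrn hcont hmem
    refine ⟨(Set.Iic c).indicator g, hm.indicator measurableSet_Iic,
      fun t => Set.indicator_nonneg (fun u _ => h0 u) t,
      fun t => Set.indicator_le_self' (fun u _ => h0 u) t, ?_, ?_⟩
    · rw [MeasureTheory.setIntegral_indicator measurableSet_Iic, Set.Ici_inter_Iic]
      exact hc
    · intro T hT
      rcases le_total c T with hcT | hcT
      · rw [MeasureTheory.setIntegral_indicator measurableSet_Iic]
        have heq : Set.Icc r T ∩ Set.Iic c = Set.Icc r c := by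
          ext x
          simp only [Set.mem_inter_iff, Set.mem_Icc, Set.mem_Iic]
          constructor
          · rintro ⟨⟨h1, _⟩, h2⟩; exact ⟨h1, h2⟩
          · rintro ⟨h1, h2⟩; exact ⟨⟨h1, le_trans h2 hcT⟩, h2⟩
        rw [heq]; exact hc
      · rw [MeasureTheory.setIntegral_indicator measurableSet_Iic]
        have heq : Set.Icc r T ∩ Set.Iic c = Set.Icc r T :=
          Set.inter_eq_left.2 (fun x hx => le_trans hx.2 hcT)
        rw [heq]
        refine le_antisymm ?_ hT
        calc (∫ t in Set.Icc r T, g t) ≤ ∫ t in Set.Icc r c, g t :=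
            cum_mono (hint.mono_set Set.Icc_subset_Ici_self) h0 (Set.Icc_subset_Icc_right hcT)
          _ = p := hc

end Trunc

section Energy

lemma energy_le (α : ℕ) (hα : 1 ≤ α) (J₁ J₂ : Finset Job) (π : Job → Job)
    (hπ : Set.BijOn π ↑J₁ ↑J₂) (S₁ S₂ : Sched) (κ d : ℝ) (hκ : 0 ≤ κ) (hd : 0 ≤ d)
    (h2m : ∀ j ∈ J₂, Measurable (S₂ j)) (h20 : ∀ j ∈ J₂, ∀ t, 0 ≤ S₂ j t)
    (h2r : ∀ j ∈ J₂, ∀ t, t < j.r → S₂ j t = 0) (h2rn : ∀ j ∈ J₂, 0 ≤ j.r)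
    (h10 : ∀ j ∈ J₁, ∀ t, 0 ≤ S₁ j t)
    (hle : ∀ j ∈ J₁, ∀ t, S₁ j t ≤ κ * S₂ (π j) (t - d)) :
    energy α J₁ S₁ ≤ ENNReal.ofReal (κ ^ α) * energy α J₂ S₂ := by
  set A : ℝ → ℝ := fun u => ∑ j ∈ J₂, S₂ j u with hA
  have hsum : ∀ t : ℝ, (∑ j ∈ J₁, S₁ j t) ≤ κ * A (t - d) := by
    intro t
    calc (∑ j ∈ J₁, S₁ j t) ≤ ∑ j ∈ J₁, κ * S₂ (π j) (t - d) :=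
        Finset.sum_le_sum (fun j hj => hle j hj t)
      _ = κ * ∑ j ∈ J₁, S₂ (π j) (t - d) := by rw [Finset.mul_sum]
      _ = κ * A (t - d) := by
        congr 1
        exact Finset.sum_bij (fun j _ => π j) (fun a ha => hπ.mapsTo ha)
          (fun a ha b hb hab => hπ.injOn ha hb hab)
          (fun b hb => by
            obtain ⟨a, ha, rfl⟩ := hπ.surjOn hb
            exact ⟨a, ha, rfl⟩)
          (fun a ha => rfl)
  have hpt : ∀ t, ENNReal.ofReal ((∑ j ∈ J₁, S₁ j t) ^ α) ≤
      ENNReal.ofReal (κ ^ α) * ENNReal.ofReal (A (t - d) ^ α) := by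
    intro t
    rw [← ENNReal.ofReal_mul (pow_nonneg hκ α), ← mul_pow]
    exact ENNReal.ofReal_le_ofReal
      (pow_le_pow_left₀ (Finset.sum_nonneg fun j hj => h10 j hj t) (hsum t) α)
  have hshift : (∫⁻ t in Set.Ioi (0:ℝ), ENNReal.ofReal (A (t - d) ^ α)) =
      ∫⁻ u in Set.Ioi (-d), ENNReal.ofReal (A u ^ α) := by
    have := lintegral_Ioi_shift (fun u => ENNReal.ofReal (A u ^ α)) d 0
    simpa [zero_sub] using this
  have hzero : (∫⁻ u in Set.Ioc (-d) 0, ENNReal.ofReal (A u ^ α)) = 0 := by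
    rw [setLIntegral_congr (Ioo_ae_eq_Ioc (a := -d) (b := (0:ℝ))).symm]
    have hz : ∀ u ∈ Set.Ioo (-d) (0:ℝ), ENNReal.ofReal (A u ^ α) = 0 := by
      intro u hu
      have hAz : A u = 0 := Finset.sum_eq_zero fun j hj =>
        h2r j hj u (lt_of_lt_of_le hu.2 (h2rn j hj))
      rw [hAz, zero_pow (by omega), ENNReal.ofReal_zero]
    calc (∫⁻ u in Set.Ioo (-d) (0:ℝ), ENNReal.ofReal (A u ^ α))
        = ∫⁻ _ in Set.Ioo (-d) (0:ℝ), (0:ℝ≥0∞) :=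
          setLIntegral_congr_fun measurableSet_Ioo hz
      _ = 0 := by simp
  have hsplit : (∫⁻ u in Set.Ioi (-d), ENNReal.ofReal (A u ^ α)) =
      ∫⁻ u in Set.Ioi (0:ℝ), ENNReal.ofReal (A u ^ α) := by
    rw [← Set.Ioc_union_Ioi_eq_Ioi (by linarith : -d ≤ (0:ℝ)),
      lintegral_union measurableSet_Ioi (Set.Ioc_disjoint_Ioi le_rfl), hzero, zero_add]
  calc energy α J₁ S₁
      ≤ ∫⁻ t in Set.Ioi (0:ℝ), ENNReal.ofReal (κ ^ α) * ENNReal.ofReal (A (t - d) ^ α) :=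
        lintegral_mono fun t => hpt t
    _ = ENNReal.ofReal (κ ^ α) * ∫⁻ t in Set.Ioi (0:ℝ), ENNReal.ofReal (A (t - d) ^ α) :=
        lintegral_const_mul' _ _ ENNReal.ofReal_ne_top
    _ = ENNReal.ofReal (κ ^ α) * energy α J₂ S₂ := by rw [hshift, hsplit]; rfl

end Energy

/-- **Lemma D.1.** The energy plus integral weighted flow time objective is
`β`-smooth with `β = max(4·max_j v_j, 2^α − 1)`: (i) the optimal cost is
smooth under small perturbations of the jobs, and (ii) the weighted flow time
of dominated, slightly shifted work profiles is controlled. -/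
theorem weighted_flow_time_smooth (α : ℕ) (hα : 1 ≤ α)
    (J₁ J₂ : Finset Job) (hv₁ : ValidInstance J₁) (hv₂ : ValidInstance J₂)
    (hcard : J₁.card = J₂.card)
    (π : Job → Job) (hπ : Set.BijOn π ↑J₁ ↑J₂)
    (η η' : ℝ) (hη₀ : 0 ≤ η) (hη₁ : η ≤ 1) (hη'₀ : 0 ≤ η') (hη'₁ : η' ≤ 1)
    (β : ℝ) (hβ : β = max (4 * maxV J₁) ((2 : ℝ) ^ α - 1)) :
    ((∀ j ∈ J₁, |j.r - (π j).r| ≤ η' ∧ j.p ≤ (π j).p * (1 + η) ∧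
        j.v ≤ (π j).v * (1 + η)) →
      OPT α J₁ ≤ ENNReal.ofReal (1 + β * η) * OPT α J₂ +
        ENNReal.ofReal (β * (J₁.card : ℝ) * η')) ∧
    (∀ S₁ S₂ : Sched, Feasible J₁ S₁ → Feasible J₂ S₂ →
      (∀ j ∈ J₁, j.p ≤ (π j).p ∧ j.v ≤ (π j).v ∧ (π j).r - η' ≤ j.r ∧
        ∀ t : ℝ, (π j).r + η' ≤ t → work S₁ j t ≤ work S₂ (π j) (t - η')) →
      wFlowTime S₁ J₁ ≤ wFlowTime S₂ J₂ + ENNReal.ofReal (β * (J₁.card : ℝ) * η')) := by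
  have hM0 : 0 ≤ maxV J₁ := maxV_nonneg J₁
  have hβ1 : 1 ≤ β := by
    rw [hβ]
    refine le_trans ?_ (le_max_right _ _)
    have h2 : (2:ℝ) ^ 1 ≤ 2 ^ α := pow_le_pow_right₀ one_le_two hα
    simp only [pow_one] at h2
    linarith
  have h4M : 4 * maxV J₁ ≤ β := hβ ▸ le_max_left _ _
  have h2α : (2:ℝ) ^ α - 1 ≤ β := hβ ▸ le_max_right _ _
  have hcardnn : (0:ℝ) ≤ (J₁.card : ℝ) := Nat.cast_nonneg _
  have hcb : (J₁.card : ℝ≥0∞) * ENNReal.ofReal (2 * maxV J₁ * η') ≤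
      ENNReal.ofReal (β * (J₁.card : ℝ) * η') := by
    rw [← ENNReal.ofReal_natCast (J₁.card), ← ENNReal.ofReal_mul (Nat.cast_nonneg _)]
    refine ENNReal.ofReal_le_ofReal ?_
    nlinarith [mul_nonneg (mul_nonneg hcardnn hη'₀)
      (by linarith : (0:ℝ) ≤ β - 2 * maxV J₁)]
  constructor
  · -- Part (i)
    intro hjob
    have ha0 : ENNReal.ofReal (1 + β * η) ≠ 0 := by
      rw [Ne, ENNReal.ofReal_eq_zero, not_le]
      nlinarith
    by_cases hOPT2 : OPT α J₂ = ⊤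
    · rw [hOPT2, ENNReal.mul_top ha0]
      exact le_top
    have key : ∀ S₂ : Sched, Feasible J₂ S₂ →
        OPT α J₁ ≤ ENNReal.ofReal (1 + β * η) * cost α S₂ J₂ +
          ENNReal.ofReal (β * (J₁.card : ℝ) * η') := by
      intro S₂ hS₂
      -- choose truncated shifted-and-scaled speed profiles
      have hex : ∀ j : Job, ∃ h : ℝ → ℝ, j ∈ J₁ →
          (Measurable h ∧ (∀ t, 0 ≤ h t) ∧
           (∀ t, h t ≤ (1 + η) * S₂ (π j) (t - η')) ∧
           (∫ t in Set.Ici j.r, h t) = j.p ∧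
           (∀ T, j.p ≤ (∫ t in Set.Icc j.r T, (1 + η) * S₂ (π j) (t - η')) →
             (∫ t in Set.Icc j.r T, h t) = j.p)) := by
        intro j
        by_cases hj : j ∈ J₁
        · obtain ⟨hm₂, h0₂, hr₂, hp₂⟩ := hS₂ (π j) (hπ.mapsTo hj)
          obtain ⟨hr02, hp2pos, hv2pos⟩ := hv₂ (π j) (hπ.mapsTo hj)
          have habs := abs_le.1 (hjob j hj).1
          have hr1 : j.r ≤ (π j).r + η' := by linarith [habs.1]
          have hgm : Measurable (fun t => (1 + η) * S₂ (π j) (t - η')) :=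
            (hm₂.comp (measurable_id.sub measurable_const)).const_mul _
          have hg0 : ∀ t, 0 ≤ (1 + η) * S₂ (π j) (t - η') :=
            fun t => mul_nonneg (by linarith) (h0₂ _)
          have hS₂int : IntegrableOn (S₂ (π j)) (Set.Ici (π j).r) volume :=
            integrableOn_of_integral_pos (by rw [hp₂]; exact hp2pos)
          have hext : IntegrableOn (S₂ (π j)) (Set.Ici (j.r - η')) volume :=
            integrableOn_Ici_extend (by linarith) (fun t ht => hr₂ t ht) hS₂int
          have hgint : IntegrableOn (fun t => (1 + η) * S₂ (π j) (t - η'))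
              (Set.Ici j.r) volume := (integrableOn_shift hext).const_mul _
          have hval : (∫ t in Set.Ici j.r, (1 + η) * S₂ (π j) (t - η')) =
              (1 + η) * (π j).p := by
            rw [MeasureTheory.integral_const_mul]
            congr 1
            rw [integral_Ici_shift (S₂ (π j)) η' j.r,
              integral_Ici_extend (by linarith : j.r - η' ≤ (π j).r)
                (fun t ht => hr₂ t ht), hp₂]
          obtain ⟨hr01, hp1pos, hv1pos⟩ := hv₁ j hj
          have hple := (hjob j hj).2.1
          obtain ⟨h, hh1, hh2, hh3, hh4, hh5⟩ :=
            exists_trunc _ hgm hg0 j.r j.p hgint hp1pos (by rw [hval]; nlinarith)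
          exact ⟨h, fun _ => ⟨hh1, hh2, hh3, hh4, hh5⟩⟩
        · exact ⟨fun _ => 0, fun h => absurd h hj⟩
      choose H hH using hex
      set S₁ : Sched := fun j t => if j ∈ J₁ then H j t else 0 with hS₁def
      have hS₁eq : ∀ j ∈ J₁, S₁ j = H j := fun j hj => funext fun t => if_pos hj
      have hfeas : Feasible J₁ S₁ := by
        intro j hj
        obtain ⟨hm, h0, hle, hint, -⟩ := hH j hj
        obtain ⟨hm₂, h0₂, hr₂, hp₂⟩ := hS₂ (π j) (hπ.mapsTo hj)
        have habs := abs_le.1 (hjob j hj).1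
        have hr1 : j.r ≤ (π j).r + η' := by linarith [habs.1]
        refine ⟨by rw [hS₁eq j hj]; exact hm, fun t => by rw [hS₁eq j hj]; exact h0 t,
          fun t ht => ?_, by rw [hS₁eq j hj]; exact hint⟩
        · rw [hS₁eq j hj]
          refine le_antisymm (le_trans (hle t) ?_) (h0 t)
          rw [hr₂ (t - η') (by linarith : t - η' < (π j).r), mul_zero]
      have hE : energy α J₁ S₁ ≤ ENNReal.ofReal ((1 + η) ^ α) * energy α J₂ S₂ :=
        energy_le α hα J₁ J₂ π hπ S₁ S₂ (1 + η) η' (by linarith) hη'₀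
          (fun j hj => (hS₂ j hj).1) (fun j hj => (hS₂ j hj).2.1)
          (fun j hj => (hS₂ j hj).2.2.1) (fun j hj => (hv₂ j hj).1)
          (fun j hj t => by rw [hS₁eq j hj]; exact (hH j hj).2.1 t)
          (fun j hj t => by rw [hS₁eq j hj]; exact (hH j hj).2.2.1 t)
      have hflow : ∀ j ∈ J₁,
          ENNReal.ofReal j.v * (ctime S₁ j - ENNReal.ofReal j.r) ≤
            ENNReal.ofReal (1 + η) * (ENNReal.ofReal (π j).v *
              (ctime S₂ (π j) - ENNReal.ofReal (π j).r)) +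
            ENNReal.ofReal (2 * maxV J₁ * η') := by
        intro j hj
        obtain ⟨hm₂, h0₂, hr₂, hp₂⟩ := hS₂ (π j) (hπ.mapsTo hj)
        obtain ⟨hr02, hp2pos, hv2pos⟩ := hv₂ (π j) (hπ.mapsTo hj)
        obtain ⟨hr01, hp1pos, hv1pos⟩ := hv₁ j hj
        have habs := abs_le.1 (hjob j hj).1
        have hr1 : j.r ≤ (π j).r + η' := by linarith [habs.1]
        have hr2 : (π j).r ≤ j.r + η' := by linarith [habs.2]
        have hS₂int : IntegrableOn (S₂ (π j)) (Set.Ici (π j).r) volume :=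
          integrableOn_of_integral_pos (by rw [hp₂]; exact hp2pos)
        have hct : ctime S₁ j ≤ ctime S₂ (π j) + ENNReal.ofReal η' := by
          refine ctime_shift_le hη'₀ hr02 ?_
          intro c hc hwc
          have hcint : (∫ u in Set.Icc (π j).r c, S₂ (π j) u) = (π j).p := by
            simp only [work] at hwc; linarith
          have hkey : j.p ≤ ∫ t in Set.Icc j.r (c + η'), (1 + η) * S₂ (π j) (t - η') := by
            rw [MeasureTheory.integral_const_mul, integral_Icc_shift]
            have hsub : Set.Icc (π j).r c ⊆ Set.Icc (j.r - η') (c + η' - η') :=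
              Set.Icc_subset_Icc (by linarith) (by linarith)
            have hmono := cum_mono (s := Set.Icc (π j).r c)
              ((integrableOn_Ici_extend (by linarith : j.r - η' ≤ (π j).r)
                (fun t ht => hr₂ t ht) hS₂int).mono_set Set.Icc_subset_Ici_self)
              h0₂ hsub
            rw [hcint] at hmono
            have hple := (hjob j hj).2.1
            nlinarith
          refine ⟨by linarith, ?_⟩
          simp only [work]
          rw [hS₁eq j hj, (hH j hj).2.2.2.2 (c + η') hkey]
          ring
        have hfj := flow_job (M := maxV J₁) (d := η') (r₂ := (π j).r) hη'₀ hr01 hv1pos.le ((hjob j hj).2.2)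
          (le_maxV hj) (by linarith) hct
        calc ENNReal.ofReal j.v * (ctime S₁ j - ENNReal.ofReal j.r)
            ≤ ENNReal.ofReal ((π j).v * (1 + η)) *
                (ctime S₂ (π j) - ENNReal.ofReal (π j).r) +
              ENNReal.ofReal (2 * maxV J₁ * η') := hfj
          _ = _ := by
            rw [mul_comm ((π j).v) (1 + η),
              ENNReal.ofReal_mul (by linarith : (0:ℝ) ≤ 1 + η), mul_assoc]
      have hsumbij : (∑ j ∈ J₁, ENNReal.ofReal (π j).v *
          (ctime S₂ (π j) - ENNReal.ofReal (π j).r)) = wFlowTime S₂ J₂ :=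
        Finset.sum_bij (fun j _ => π j) (fun a ha => hπ.mapsTo ha)
          (fun a ha b hb hab => hπ.injOn ha hb hab)
          (fun b hb => by obtain ⟨a, ha, rfl⟩ := hπ.surjOn hb; exact ⟨a, ha, rfl⟩)
          (fun a ha => rfl)
      have hF : wFlowTime S₁ J₁ ≤ ENNReal.ofReal (1 + η) * wFlowTime S₂ J₂ +
          (J₁.card : ℝ≥0∞) * ENNReal.ofReal (2 * maxV J₁ * η') := by
        calc wFlowTime S₁ J₁
            ≤ ∑ j ∈ J₁, (ENNReal.ofReal (1 + η) * (ENNReal.ofReal (π j).v *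
                (ctime S₂ (π j) - ENNReal.ofReal (π j).r)) +
              ENNReal.ofReal (2 * maxV J₁ * η')) := Finset.sum_le_sum hflow
          _ = ENNReal.ofReal (1 + η) * (∑ j ∈ J₁, ENNReal.ofReal (π j).v *
                (ctime S₂ (π j) - ENNReal.ofReal (π j).r)) +
              (J₁.card : ℝ≥0∞) * ENNReal.ofReal (2 * maxV J₁ * η') := by
            rw [Finset.sum_add_distrib, Finset.mul_sum, Finset.sum_const, nsmul_eq_mul]
          _ = _ := by rw [hsumbij]
      have hEb : ENNReal.ofReal ((1 + η) ^ α) ≤ ENNReal.ofReal (1 + β * η) :=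
        ENNReal.ofReal_le_ofReal
          (le_trans (one_add_pow_le α hη₀ hη₁) (by nlinarith))
      have hFb : ENNReal.ofReal (1 + η) ≤ ENNReal.ofReal (1 + β * η) :=
        ENNReal.ofReal_le_ofReal (by nlinarith)
      have hcost : cost α S₁ J₁ ≤ ENNReal.ofReal (1 + β * η) * cost α S₂ J₂ +
          ENNReal.ofReal (β * (J₁.card : ℝ) * η') := by
        calc cost α S₁ J₁ = energy α J₁ S₁ + wFlowTime S₁ J₁ := rfl
          _ ≤ ENNReal.ofReal ((1 + η) ^ α) * energy α J₂ S₂ +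
              (ENNReal.ofReal (1 + η) * wFlowTime S₂ J₂ +
               (J₁.card : ℝ≥0∞) * ENNReal.ofReal (2 * maxV J₁ * η')) := add_le_add hE hF
          _ ≤ ENNReal.ofReal (1 + β * η) * energy α J₂ S₂ +
              (ENNReal.ofReal (1 + β * η) * wFlowTime S₂ J₂ +
               ENNReal.ofReal (β * (J₁.card : ℝ) * η')) := by
            exact add_le_add (mul_le_mul_left hEb _)
              (add_le_add (mul_le_mul_left hFb _) hcb)
          _ = ENNReal.ofReal (1 + β * η) * cost α S₂ J₂ +
              ENNReal.ofReal (β * (J₁.card : ℝ) * η') := by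
            simp only [cost]; rw [mul_add]; ring
      exact le_trans (by unfold OPT; exact iInf₂_le S₁ hfeas) hcost
    refine ENNReal.le_of_forall_pos_le_add fun ε hε hlt => ?_
    have hat : ENNReal.ofReal (1 + β * η) ≠ ⊤ := ENNReal.ofReal_ne_top
    have hdiv : (ε : ℝ≥0∞) / ENNReal.ofReal (1 + β * η) ≠ 0 := by
      rw [Ne, ENNReal.div_eq_zero_iff]
      push_neg
      exact ⟨ENNReal.coe_ne_zero.2 hε.ne', hat⟩
    have hlt2 : OPT α J₂ < OPT α J₂ + (ε : ℝ≥0∞) / ENNReal.ofReal (1 + β * η) :=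
      ENNReal.lt_add_right hOPT2 hdiv
    obtain ⟨S₂, hS₂f, hcS₂⟩ : ∃ S₂, ∃ _ : Feasible J₂ S₂,
        cost α S₂ J₂ < OPT α J₂ + (ε : ℝ≥0∞) / ENNReal.ofReal (1 + β * η) := by
      simpa [OPT, iInf_lt_iff] using hlt2
    calc OPT α J₁ ≤ ENNReal.ofReal (1 + β * η) * cost α S₂ J₂ +
          ENNReal.ofReal (β * (J₁.card : ℝ) * η') := key S₂ hS₂f
      _ ≤ ENNReal.ofReal (1 + β * η) *
            (OPT α J₂ + (ε : ℝ≥0∞) / ENNReal.ofReal (1 + β * η)) +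
          ENNReal.ofReal (β * (J₁.card : ℝ) * η') :=
        add_le_add_left (mul_le_mul_right hcS₂.le _) _
      _ = ENNReal.ofReal (1 + β * η) * OPT α J₂ +
          ENNReal.ofReal (1 + β * η) *
            ((ε : ℝ≥0∞) / ENNReal.ofReal (1 + β * η)) +
          ENNReal.ofReal (β * (J₁.card : ℝ) * η') := by rw [mul_add]
      _ ≤ ENNReal.ofReal (1 + β * η) * OPT α J₂ + (ε : ℝ≥0∞) +
          ENNReal.ofReal (β * (J₁.card : ℝ) * η') := by
            gcongr
            exact ENNReal.mul_div_le
      _ = ENNReal.ofReal (1 + β * η) * OPT α J₂ +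
          ENNReal.ofReal (β * (J₁.card : ℝ) * η') + (ε : ℝ≥0∞) := by
            rw [add_right_comm]
  · -- Part (ii)
    intro S₁ S₂ hf₁ hf₂ hdom
    have hflow : ∀ j ∈ J₁,
        ENNReal.ofReal j.v * (ctime S₁ j - ENNReal.ofReal j.r) ≤
          ENNReal.ofReal (π j).v * (ctime S₂ (π j) - ENNReal.ofReal (π j).r) +
          ENNReal.ofReal (2 * maxV J₁ * η') := by
      intro j hj
      obtain ⟨hm₁, h0₁, hr₁, hp₁⟩ := hf₁ j hj
      obtain ⟨hm₂, h0₂, hr₂, hp₂⟩ := hf₂ (π j) (hπ.mapsTo hj)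
      obtain ⟨hr01, hp1pos, hv1pos⟩ := hv₁ j hj
      obtain ⟨hr02, hp2pos, hv2pos⟩ := hv₂ (π j) (hπ.mapsTo hj)
      obtain ⟨hpp, hvv, hrr, hw⟩ := hdom j hj
      have hint₁ : IntegrableOn (S₁ j) (Set.Ici j.r) volume :=
        integrableOn_of_integral_pos (by rw [hp₁]; exact hp1pos)
      have hint₂ : IntegrableOn (S₂ (π j)) (Set.Ici (π j).r) volume :=
        integrableOn_of_integral_pos (by rw [hp₂]; exact hp2pos)
      have hct : ctime S₁ j ≤ ctime S₂ (π j) + ENNReal.ofReal η' := by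
        refine ctime_shift_le hη'₀ hr02 ?_
        intro c hc hwc
        have hjr : j.r ≤ c + η' := by
          by_contra hcon
          push_neg at hcon
          have h2 := hw j.r (by linarith)
          have h3 : work S₂ (π j) (j.r - η') = 0 :=
            work_zero_of_le h0₂ hint₂ hp₂ (by linarith) hwc
          rw [work_at_release, h3] at h2
          linarith
        refine ⟨hjr, ?_⟩
        have h2 := hw (c + η') (by linarith)
        rw [show c + η' - η' = c by ring, hwc] at h2
        exact le_antisymm h2 (work_nonneg h0₁ hint₁ hp₁ _)
      exact flow_job (d := η') hη'₀ hr01 hv1pos.le hvv (le_maxV hj) (by linarith) hct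
    have hsumbij : (∑ j ∈ J₁, ENNReal.ofReal (π j).v *
        (ctime S₂ (π j) - ENNReal.ofReal (π j).r)) = wFlowTime S₂ J₂ :=
      Finset.sum_bij (fun j _ => π j) (fun a ha => hπ.mapsTo ha)
        (fun a ha b hb hab => hπ.injOn ha hb hab)
        (fun b hb => by obtain ⟨a, ha, rfl⟩ := hπ.surjOn hb; exact ⟨a, ha, rfl⟩)
        (fun a ha => rfl)
    calc wFlowTime S₁ J₁
        ≤ ∑ j ∈ J₁, (ENNReal.ofReal (π j).v *
            (ctime S₂ (π j) - ENNReal.ofReal (π j).r) +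
          ENNReal.ofReal (2 * maxV J₁ * η')) := Finset.sum_le_sum hflow
      _ = (∑ j ∈ J₁, ENNReal.ofReal (π j).v *
            (ctime S₂ (π j) - ENNReal.ofReal (π j).r)) +
          (J₁.card : ℝ≥0∞) * ENNReal.ofReal (2 * maxV J₁ * η') := by
        rw [Finset.sum_add_distrib, Finset.sum_const, nsmul_eq_mul]
      _ ≤ wFlowTime S₂ J₂ + ENNReal.ofReal (β * (J₁.card : ℝ) * η') := by
        rw [hsumbij]
        exact add_le_add_right hcb _
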